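/- arXiv:1712.07724 — 2 statements merged into one kernel-verified Lean document; each statement's English description precedes it below -/
import Mathlib

section
/- Assume ZF and that 𝒞_{ω₁} is a normal filter on ω₁. If 𝒞_{ω₁} is an ultrafilter on ω₁, then for every sequence (X_δ : δ ∈ Lim(ω₁)) with X_δ ⊆ δ for each δ, there is a club C ⊆ ω₁ such that either C ∩ δ ⊆ X_δ for every δ ∈ C, or C ∩ X_δ = ∅ for every δ ∈ C. -/
noncomputable def omega1 : Ordinal.{0} := (Cardinal.aleph 1).ord

def IsClubOmega1 (C : Set Ordinal) : Prop :=
  C ⊆ Set.Iio omega1 ∧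
    (∀ δ, δ < omega1 → δ ≠ 0 → sSup (C ∩ Set.Iio δ) = δ → δ ∈ C) ∧
    ∀ α, α < omega1 → ∃ β ∈ C, α < β

/-- The collection `𝒞_{ω₁}` of subsets of `ω₁` containing a club. -/
def ClubFilter : Set (Set Ordinal) :=
  {X | ∃ C, IsClubOmega1 C ∧ C ⊆ X}

/-- Normality of `𝒞_{ω₁}`: closure under diagonal intersections. -/
def ClubFilterNormal : Prop :=
  ∀ W : Ordinal → Set Ordinal, (∀ α, α < omega1 → W α ∈ ClubFilter) →
    {δ | δ < omega1 ∧ ∀ α < δ, δ ∈ W α} ∈ ClubFilter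

lemma one_lt_omega1 : (1 : Ordinal) < omega1 := by
  rw [omega1, Cardinal.lt_ord]
  simpa using Cardinal.one_lt_aleph0.trans_le (Cardinal.aleph0_le_aleph 1)

lemma club_inter_Ioi {C : Set Ordinal} (hC : IsClubOmega1 C) {γ : Ordinal} (hγ : γ < omega1) :
    IsClubOmega1 (C ∩ Set.Ioi γ) := by
  obtain ⟨hsub, hclosed, hunb⟩ := hC
  refine ⟨fun x hx => hsub hx.1, ?_, ?_⟩
  · intro δ hδ hδ0 hsup
    have hne : ((C ∩ Set.Ioi γ) ∩ Set.Iio δ).Nonempty := by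
      by_contra h
      rw [Set.not_nonempty_iff_eq_empty] at h
      rw [h] at hsup
      simp at hsup
      exact hδ0 hsup.symm
    have hCmem : δ ∈ C := by
      apply hclosed δ hδ hδ0
      apply le_antisymm
      · exact csSup_le' (fun b hb => le_of_lt hb.2)
      · calc δ = sSup ((C ∩ Set.Ioi γ) ∩ Set.Iio δ) := hsup.symm
          _ ≤ sSup (C ∩ Set.Iio δ) :=
            csSup_le_csSup ⟨δ, fun b hb => le_of_lt hb.2⟩ hne
              (fun b hb => ⟨hb.1.1, hb.2⟩)
    obtain ⟨x, hx⟩ := hne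
    exact ⟨hCmem, lt_of_lt_of_le hx.1.2 (le_csSup ⟨δ, fun b hb => le_of_lt hb.2⟩ hx |>.trans hsup.le)⟩
  · intro α hα
    obtain ⟨β, hβC, hβ⟩ := hunb (max α γ) (max_lt hα hγ)
    exact ⟨β, ⟨hβC, (le_max_right α γ).trans_lt hβ⟩, (le_max_left α γ).trans_lt hβ⟩

lemma clubFilter_inter (hnormal : ClubFilterNormal) {T U : Set Ordinal}
    (hT : T ∈ ClubFilter) (hU : U ∈ ClubFilter) : T ∩ U ∈ ClubFilter := by
  set W : Ordinal → Set Ordinal := fun α => if α = 0 then T else U with hW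
  obtain ⟨C, hC, hCsub⟩ := hnormal W (by
    intro α _
    simp only [hW]
    by_cases h : α = 0 <;> simp [h, hT, hU])
  refine ⟨C ∩ Set.Ioi 1, club_inter_Ioi hC one_lt_omega1, ?_⟩
  rintro δ ⟨hδC, hδ1⟩
  obtain ⟨hδω, hδW⟩ := hCsub hδC
  have h0 : δ ∈ W 0 := hδW 0 (lt_trans one_pos hδ1)
  have h1 : δ ∈ W 1 := hδW 1 hδ1
  simp only [hW, if_pos rfl] at h0
  simp only [hW] at h1
  rw [if_neg one_ne_zero] at h1
  exact ⟨h0, h1⟩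

theorem stmt6 (hnormal : ClubFilterNormal)
    (hultra : ∀ S : Set Ordinal, S ⊆ Set.Iio omega1 →
      S ∈ ClubFilter ∨ (Set.Iio omega1 \ S) ∈ ClubFilter)
    (X : Ordinal → Set Ordinal)
    (hX : ∀ δ, δ < omega1 → Order.IsSuccLimit δ → X δ ⊆ Set.Iio δ) :
    ∃ C, IsClubOmega1 C ∧
      ((∀ δ ∈ C, Order.IsSuccLimit δ → C ∩ Set.Iio δ ⊆ X δ) ∨
        (∀ δ ∈ C, Order.IsSuccLimit δ → C ∩ X δ = ∅)) := by
  classical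
  set S : Ordinal → Set Ordinal := fun α => {δ | δ < omega1 ∧ α ∈ X δ} with hS
  have hSsub : ∀ α, S α ⊆ Set.Iio omega1 := fun α δ hδ => hδ.1
  set W : Ordinal → Set Ordinal :=
    fun α => if S α ∈ ClubFilter then S α else Set.Iio omega1 \ S α with hWdef
  have hWmem : ∀ α, W α ∈ ClubFilter := by
    intro α
    by_cases h : S α ∈ ClubFilter
    · simpa only [hWdef, if_pos h] using h
    · simpa only [hWdef, if_neg h] using (hultra (S α) (hSsub α)).resolve_left h
  have hD : {δ | δ < omega1 ∧ ∀ α < δ, δ ∈ W α} ∈ ClubFilter :=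
    hnormal W (fun α _ => hWmem α)
  set A : Set Ordinal := {α | α < omega1 ∧ S α ∈ ClubFilter} with hA
  have hAsub : A ⊆ Set.Iio omega1 := fun α hα => hα.1
  rcases hultra A hAsub with hmem | hmem
  · obtain ⟨C, hC, hCsub⟩ := clubFilter_inter hnormal hmem hD
    refine ⟨C, hC, Or.inl ?_⟩
    rintro δ hδC hδlim α ⟨hαC, hαδ⟩
    have hαA := (hCsub hαC).1
    have hδD := (hCsub hδC).2
    have hδW : δ ∈ W α := hδD.2 α hαδ
    rw [hWdef] at hδW
    simp only [if_pos hαA.2] at hδW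
    exact hδW.2
  · obtain ⟨C, hC, hCsub⟩ := clubFilter_inter hnormal hmem hD
    refine ⟨C, hC, Or.inr ?_⟩
    intro δ hδC hδlim
    ext α
    simp only [Set.mem_inter_iff, Set.mem_empty_iff_false, iff_false, not_and]
    intro hαC hαX
    have hδD := (hCsub hδC).2
    have hαnA := (hCsub hαC).1
    have hαδ : α < δ := hX δ hδD.1 hδlim hαX
    have hnotclub : ¬ S α ∈ ClubFilter := fun h => hαnA.2 ⟨hαnA.1, h⟩
    have hδW : δ ∈ W α := hδD.2 α hαδ
    rw [hWdef] at hδW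
    simp only [if_neg hnotclub] at hδW
    exact hδW.2 ⟨hδD.1, hαX⟩
end

section
/- Measuring is equivalent to its countable-family version: Measuring holds if and only if for every sequence (𝒞_δ : δ ∈ Lim(ω₁)) where each 𝒞_δ is a countable collection of closed subsets of δ, there is a club C ⊆ ω₁ such that for every δ ∈ C and every D ∈ 𝒞_δ there is α < δ with either (C ∩ δ) \ α ⊆ D or ((C ∩ δ) \ α) ∩ D = ∅. -/
def IsClub' (C : Set Ordinal) : Prop :=
  C ⊆ Set.Iio omega1 ∧
    (∀ δ, δ < omega1 → δ ≠ 0 → sSup (C ∩ Set.Iio δ) = δ → δ ∈ C) ∧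
    ∀ α, α < omega1 → ∃ β ∈ C, α < β

/-- `D` is closed (in the order topology) as a subset of `β`. -/
def IsClosedIn (D : Set Ordinal) (β : Ordinal) : Prop :=
  ∀ δ, δ < β → δ ≠ 0 → sSup (D ∩ Set.Iio δ) = δ → δ ∈ D

/-- The principle Measuring. -/
def Measuring : Prop :=
  ∀ A : Ordinal → Set Ordinal,
    (∀ δ, δ < omega1 → Order.IsSuccLimit δ → A δ ⊆ Set.Iio δ ∧ IsClosedIn (A δ) δ) →
    ∃ C, IsClub' C ∧ ∀ δ ∈ C, Order.IsSuccLimit δ →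
      ∃ α < δ, ((C ∩ Set.Iio δ) \ Set.Iio α ⊆ A δ ∨
        ((C ∩ Set.Iio δ) \ Set.Iio α) ∩ A δ = ∅)

/-- The countable-family version of Measuring. -/
def MeasuringCtble : Prop :=
  ∀ 𝒜 : Ordinal → Set (Set Ordinal),
    (∀ δ, δ < omega1 → Order.IsSuccLimit δ →
      (𝒜 δ).Countable ∧ ∀ D ∈ 𝒜 δ, D ⊆ Set.Iio δ ∧ IsClosedIn D δ) →
    ∃ C, IsClub' C ∧ ∀ δ ∈ C, Order.IsSuccLimit δ → ∀ D ∈ 𝒜 δ,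
      ∃ α < δ, ((C ∩ Set.Iio δ) \ Set.Iio α ⊆ D ∨
        ((C ∩ Set.Iio δ) \ Set.Iio α) ∩ D = ∅)

lemma isClosedIn_empty (β : Ordinal) : IsClosedIn ∅ β := by
  intro δ _ hδ0 hsup
  exfalso
  apply hδ0
  rw [Set.empty_inter] at hsup
  simpa [csSup_empty] using hsup.symm

lemma omega1_pos : 0 < omega1 := by
  rw [omega1, ← Cardinal.ord_zero]
  exact Cardinal.ord_lt_ord.2 (Cardinal.aleph_pos 1)

theorem stmt9 : Measuring ↔ MeasuringCtble := by
  constructor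
  · -- Measuring → MeasuringCtble
    intro hM 𝒜 h𝒜
    -- enumerate each countable family (together with ∅ to ensure nonemptiness)
    have hF : ∀ δ : Ordinal, ∃ f : ℕ → Set Ordinal,
        δ < omega1 → Order.IsSuccLimit δ → insert ∅ (𝒜 δ) = Set.range f := by
      intro δ
      by_cases h : δ < omega1 ∧ Order.IsSuccLimit δ
      · obtain ⟨f, hf⟩ :=
          (((h𝒜 δ h.1 h.2).1).insert ∅).exists_eq_range ⟨∅, Set.mem_insert _ _⟩
        exact ⟨f, fun _ _ => hf⟩
      · exact ⟨fun _ => ∅, fun h1 h2 => absurd ⟨h1, h2⟩ h⟩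
    choose F hF using hF
    have hAmem : ∀ (n : ℕ) (δ : Ordinal), δ < omega1 → Order.IsSuccLimit δ →
        F δ n ⊆ Set.Iio δ ∧ IsClosedIn (F δ n) δ := by
      intro n δ h1 h2
      have hm : F δ n ∈ insert ∅ (𝒜 δ) := by
        rw [hF δ h1 h2]; exact ⟨n, rfl⟩
      rcases hm with h | h
      · rw [h]; exact ⟨Set.empty_subset _, isClosedIn_empty δ⟩
      · exact (h𝒜 δ h1 h2).2 _ h
    have hC : ∀ n : ℕ, ∃ C, IsClub' C ∧ ∀ δ ∈ C, Order.IsSuccLimit δ →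
        ∃ α < δ, ((C ∩ Set.Iio δ) \ Set.Iio α ⊆ F δ n ∨
          ((C ∩ Set.Iio δ) \ Set.Iio α) ∩ F δ n = ∅) :=
      fun n => hM (fun δ => F δ n) (hAmem n)
    choose C hClub hMeas using hC
    refine ⟨⋂ n, C n, ⟨?_, ?_, ?_⟩, ?_⟩
    · exact fun x hx => (hClub 0).1 (Set.mem_iInter.1 hx 0)
    · -- closedness of the intersection
      intro δ h1 h2 h3
      refine Set.mem_iInter.2 fun n => (hClub n).2.1 δ h1 h2 (le_antisymm ?_ ?_)
      · exact csSup_le' fun x hx => hx.2.le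
      · conv_lhs => rw [← h3]
        refine csSup_le' fun x hx => ?_
        exact le_csSup ⟨δ, fun y hy => hy.2.le⟩ ⟨Set.mem_iInter.1 hx.1 n, hx.2⟩
    · -- unboundedness of the intersection
      intro α hα
      have he : ∀ (n : ℕ) (γ : Ordinal), ∃ β, γ < omega1 → β ∈ C n ∧ γ < β := by
        intro n γ
        by_cases h : γ < omega1
        · obtain ⟨β, hβ1, hβ2⟩ := (hClub n).2.2 γ h
          exact ⟨β, fun _ => ⟨hβ1, hβ2⟩⟩
        · exact ⟨0, fun hh => absurd hh h⟩
      choose e he using he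
      let s : ℕ → Ordinal := fun k =>
        Nat.rec α (fun k sk => (Finset.range (k + 1)).sup fun n => e n sk) k
      have hs0 : s 0 = α := rfl
      have hs_succ : ∀ k, s (k + 1) = (Finset.range (k + 1)).sup fun n => e n (s k) :=
        fun _ => rfl
      have hsω : ∀ k, s k < omega1 := by
        intro k
        induction k with
        | zero => exact hα
        | succ k ih =>
          rw [hs_succ]
          refine (Finset.sup_lt_iff (by simpa using omega1_pos)).2 fun n _ => ?_
          exact (hClub n).1 (he n (s k) ih).1
      have hmono : ∀ k, s k < s (k + 1) := by
        intro k
        have h0 : e 0 (s k) ≤ s (k + 1) := by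
          rw [hs_succ]; exact Finset.le_sup (f := fun n => e n (s k)) (Finset.mem_range.2 k.succ_pos)
        exact lt_of_lt_of_le (he 0 (s k) (hsω k)).2 h0
      have hsmono : Monotone s := (strictMono_nat_of_lt_succ hmono).monotone
      have hle : ∀ {n k : ℕ}, n ≤ k → e n (s k) ≤ s (k + 1) := by
        intro n k h
        rw [hs_succ]
        exact Finset.le_sup (f := fun n => e n (s k)) (Finset.mem_range.2 (Nat.lt_succ_of_le h))
      set δ := ⨆ k, s k with hδdef
      have hsleδ : ∀ k, s k ≤ δ := fun k => le_ciSup (Ordinal.bddAbove_range s) k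
      have hsltδ : ∀ k, s k < δ := fun k => lt_of_lt_of_le (hmono k) (hsleδ (k + 1))
      have hδω : δ < omega1 := by
        refine Ordinal.iSup_lt_ord ?_ hsω
        rw [Cardinal.mk_nat]
        have : omega1.cof = Cardinal.aleph 1 := Cardinal.isRegular_aleph_one.cof_eq
        rw [this]
        exact Cardinal.aleph0_lt_aleph_one
      have hαδ : α < δ := hs0 ▸ hsltδ 0
      have hδ0 : δ ≠ 0 := ne_of_gt ((zero_le (a := α)).trans_lt hαδ)
      have hmem : ∀ n, δ ∈ C n := by
        intro n
        refine (hClub n).2.1 δ hδω hδ0 (le_antisymm (csSup_le' fun x hx => hx.2.le) ?_)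
        refine ciSup_le fun k => ?_
        have hk : s k ≤ s (max k n) := hsmono (le_max_left _ _)
        have h1 : e n (s (max k n)) ∈ C n := (he n _ (hsω _)).1
        have h2 : e n (s (max k n)) < δ :=
          lt_of_le_of_lt (hle (le_max_right k n)) (hsltδ (max k n + 1))
        have h3 : e n (s (max k n)) ≤ sSup (C n ∩ Set.Iio δ) :=
          le_csSup ⟨δ, fun y hy => hy.2.le⟩ ⟨h1, h2⟩
        exact le_trans (hk.trans (he n _ (hsω _)).2.le) h3
      exact ⟨δ, Set.mem_iInter.2 hmem, hαδ⟩
    · -- measuring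
      intro δ hδ hlim D hD
      have hδω : δ < omega1 := (hClub 0).1 (Set.mem_iInter.1 hδ 0)
      obtain ⟨n, hn⟩ : ∃ n, F δ n = D := by
        have h1 : D ∈ Set.range (F δ) := by
          rw [← hF δ hδω hlim]; exact Set.mem_insert_of_mem _ hD
        exact h1
      obtain ⟨α, hα, hcase⟩ := hMeas n δ (Set.mem_iInter.1 hδ n) hlim
      refine ⟨α, hα, ?_⟩
      have hsub : ((⋂ m, C m) ∩ Set.Iio δ) \ Set.Iio α ⊆ (C n ∩ Set.Iio δ) \ Set.Iio α :=
        fun x hx => ⟨⟨Set.mem_iInter.1 hx.1.1 n, hx.1.2⟩, hx.2⟩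
      rcases hcase with h | h
      · exact Or.inl (hn ▸ hsub.trans h)
      · refine Or.inr (Set.eq_empty_of_subset_empty ?_)
        rw [← h, ← hn]
        exact Set.inter_subset_inter_left _ hsub
  · -- MeasuringCtble → Measuring
    intro hM A hA
    obtain ⟨C, hC, hP⟩ := hM (fun δ => {A δ}) (fun δ h1 h2 =>
      ⟨Set.countable_singleton _, fun D hD => by
        rw [Set.mem_singleton_iff] at hD; rw [hD]; exact hA δ h1 h2⟩)
    exact ⟨C, hC, fun δ hδ hlim => hP δ hδ hlim (A δ) rfl⟩
end
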